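/- Let H be a finitely generated free ℤ-module, Λ : H × H → ℤ a unimodular symmetric bilinear form, and sν : H → ℤ/2 a group homomorphism. Suppose Λ is of type II, i.e. Λ(x,x) ≡ 0 (mod 2) for all x ∈ H, and that Λ admits a symplectic-type basis λ₁,…,λ_k, μ₁,…,μ_k with Λ(λ_i,λ_j) = 0, Λ(μ_i,μ_j) = 0, Λ(λ_i,μ_j) = δ_{ij}. If the Arf invariant Φ := Σ_{i=1}^k sν(λ_i)·sν(μ_i) vanishes in ℤ/2, then there exists a Lagrangian L ⊆ H on which sν vanishes identically. -/

import Mathlib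

/-- `L` is a Lagrangian for the bilinear form `Λ`: a direct summand on which `Λ`
vanishes identically and whose rank is half the rank of the ambient module. -/
def IsLagrangian {H : Type*} [AddCommGroup H] [Module ℤ H]
    (Λ : H →ₗ[ℤ] H →ₗ[ℤ] ℤ) (L : Submodule ℤ H) : Prop :=
  (∃ L' : Submodule ℤ H, IsCompl L L') ∧ (∀ x ∈ L, ∀ y ∈ L, Λ x y = 0) ∧
    2 * Module.finrank ℤ L = Module.finrank ℤ H

private lemma key_lemma {H : Type*} [AddCommGroup H] [Module ℤ H]
    [Module.Free ℤ H] [Module.Finite ℤ H]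
    {k : ℕ} (b : Module.Basis (Fin k ⊕ Fin k) ℤ H)
    (Λ : H →ₗ[ℤ] H →ₗ[ℤ] ℤ) (sν : H →+ ZMod 2) (v w : Fin k → H)
    (hvw : ∀ i j, Λ (v i) (w j) = if i = j then 1 else 0)
    (hwv : ∀ i j, Λ (w i) (v j) = if i = j then 1 else 0)
    (hvv : ∀ i j, Λ (v i) (v j) = 0)
    (hww : ∀ i j, Λ (w i) (w j) = 0)
    (hsp : ∀ s, b s ∈ Submodule.span ℤ (Set.range v ∪ Set.range w))
    (hsv : ∀ i, sν (v i) = 0) :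
    ∃ L : Submodule ℤ H, IsLagrangian Λ L ∧ ∀ x ∈ L, sν x = 0 := by
  classical
  set u : Fin k ⊕ Fin k → H := Sum.elim v w with hu_def
  set φ : H →ₗ[ℤ] (Fin k ⊕ Fin k → ℤ) :=
    LinearMap.pi (fun s => Λ.flip (Sum.elim w v s)) with hφ_def
  have hφu : ∀ y, φ (u y) = Pi.single y 1 := by
    intro y
    funext s
    rcases y with i | i <;> rcases s with j | j <;>
      simp [hφ_def, hu_def, LinearMap.flip_apply, hvw, hwv, hvv, hww,
        Pi.single_apply, eq_comm]
  have hu : LinearIndependent ℤ u := by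
    have h1 : LinearIndependent ℤ (φ ∘ u) := by
      have : φ ∘ u = ⇑(Pi.basisFun ℤ (Fin k ⊕ Fin k)) := by
        funext y; simp [Function.comp, hφu y]
      rw [this]
      exact (Pi.basisFun ℤ (Fin k ⊕ Fin k)).linearIndependent
    exact h1.of_comp φ
  have hrange : Set.range u = Set.range v ∪ Set.range w := Set.Sum.elim_range v w
  have hspan : ⊤ ≤ Submodule.span ℤ (Set.range u) := by
    rw [hrange]
    intro x _
    have hx : x ∈ Submodule.span ℤ (Set.range b) := by
      rw [b.span_eq]; trivial
    refine Submodule.span_le.mpr ?_ hx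
    rintro _ ⟨s, rfl⟩
    exact hsp s
  set c : Module.Basis (Fin k ⊕ Fin k) ℤ H := Module.Basis.mk hu hspan with hc_def
  have hφeq : φ = (c.equivFun : H →ₗ[ℤ] (Fin k ⊕ Fin k → ℤ)) := by
    apply c.ext
    intro y
    have hcy : c y = u y := Module.Basis.mk_apply hu hspan y
    rw [LinearEquiv.coe_coe, hcy, hφu]
    funext s
    rw [← hcy]
    simp [Module.Basis.equivFun_apply, Pi.single_apply, Finsupp.single_apply, eq_comm]
  have hφinj : Function.Injective φ := by
    rw [hφeq]; exact c.equivFun.injective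
  -- the Lagrangian
  refine ⟨Submodule.span ℤ (Set.range v), ⟨⟨Submodule.span ℤ (Set.range w), ?_⟩, ?_, ?_⟩, ?_⟩
  · constructor
    · -- Disjoint
      rw [Submodule.disjoint_def]
      intro x hxv hxw
      apply hφinj
      rw [map_zero]
      funext s
      rcases s with j | j
      · -- Λ x (w j) = 0 since x ∈ span range w
        have : Λ.flip (w j) x = 0 := by
          refine Submodule.span_induction ?_ ?_ ?_ ?_ hxw
          · rintro _ ⟨i, rfl⟩; exact hww i j
          · simp
          · intro a b _ _ ha hb; rw [map_add, ha, hb, add_zero]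
          · intro t a _ ha; simp [ha]
        simpa [hφ_def] using this
      · have : Λ.flip (v j) x = 0 := by
          refine Submodule.span_induction ?_ ?_ ?_ ?_ hxv
          · rintro _ ⟨i, rfl⟩; exact hvv i j
          · simp
          · intro a b _ _ ha hb; rw [map_add, ha, hb, add_zero]
          · intro t a _ ha; simp [ha]
        simpa [hφ_def] using this
    · -- Codisjoint
      rw [codisjoint_iff, ← Submodule.span_union, ← hrange]
      exact le_antisymm le_top hspan
  · -- Λ vanishes on L
    intro x hx y hy
    have : Λ.flip y x = 0 := by
      refine Submodule.span_induction ?_ ?_ ?_ ?_ hx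
      · rintro _ ⟨i, rfl⟩
        -- Λ (v i) y = 0 needs induction on y
        have : Λ (v i) y = 0 := by
          refine Submodule.span_induction ?_ ?_ ?_ ?_ hy
          · rintro _ ⟨j, rfl⟩; exact hvv i j
          · simp
          · intro a b _ _ ha hb; rw [map_add, ha, hb, add_zero]
          · intro t a _ ha; simp [ha]
        simpa [LinearMap.flip_apply] using this
      · simp
      · intro a b _ _ ha hb; rw [map_add, ha, hb, add_zero]
      · intro t a _ ha; simp [ha]
    simpa [LinearMap.flip_apply] using this
  · -- rank
    have hv : LinearIndependent ℤ v := hu.comp Sum.inl Sum.inl_injective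
    have h2 : Module.finrank ℤ H = 2 * k := by
      rw [Module.finrank_eq_card_basis b, Fintype.card_sum, Fintype.card_fin]
      ring
    rw [h2]
    congr 1
    letI : Module ℤ ↥(Submodule.span ℤ (Set.range v)) := (Submodule.span ℤ (Set.range v)).module
    have h1 := Module.finrank_eq_card_basis (Module.Basis.span hv)
    rw [Fintype.card_fin] at h1
    haveI : Subsingleton (Module ℤ ↥(Submodule.span ℤ (Set.range v))) :=
      (AddCommGroup.uniqueIntModule).instSubsingleton
    convert h1 using 2
  · -- sν vanishes
    intro x hx
    refine Submodule.span_induction ?_ ?_ ?_ ?_ hx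
    · rintro _ ⟨i, rfl⟩; exact hsv i
    · simp
    · intro a b _ _ ha hb; rw [map_add, ha, hb, add_zero]
    · intro t a _ ha
      exact (congrArg sν (int_smul_eq_zsmul ‹Module ℤ H› t a)).trans
        ((map_zsmul sν t a).trans (by rw [ha, smul_zero]))

theorem stmt1 {H : Type*} [AddCommGroup H] [Module ℤ H]
    [Module.Free ℤ H] [Module.Finite ℤ H]
    (k : ℕ) (b : Module.Basis (Fin k ⊕ Fin k) ℤ H)
    (Λ : H →ₗ[ℤ] H →ₗ[ℤ] ℤ)
    (hsymm : ∀ x y, Λ x y = Λ y x)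
    (hunimod : Function.Bijective fun x : H => Λ x)
    (heven : ∀ x, Even (Λ x x))
    (hll : ∀ i j, Λ (b (Sum.inl i)) (b (Sum.inl j)) = 0)
    (hmm : ∀ i j, Λ (b (Sum.inr i)) (b (Sum.inr j)) = 0)
    (hlm : ∀ i j, Λ (b (Sum.inl i)) (b (Sum.inr j)) = if i = j then 1 else 0)
    (sν : H →+ ZMod 2)
    (hArf : ∑ i : Fin k, sν (b (Sum.inl i)) * sν (b (Sum.inr i)) = 0) :
    ∃ L : Submodule ℤ H, IsLagrangian Λ L ∧ ∀ x ∈ L, sν x = 0 := by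
  classical
  set a : Fin k → ZMod 2 := fun i => sν (b (Sum.inl i)) with ha_def
  set e : Fin k → ZMod 2 := fun i => sν (b (Sum.inr i)) with he_def
  set B : Finset (Fin k) := Finset.univ.filter (fun i => a i = 1 ∧ e i = 1) with hB_def
  have hmemB : ∀ i, i ∈ B ↔ (a i = 1 ∧ e i = 1) := by
    intro i; simp [hB_def]
  have hone : ∀ x : ZMod 2, x ≠ 0 → x = 1 := by decide
  have hnotB : ∀ i, i ∉ B → a i = 0 ∨ e i = 0 := by
    intro i hi
    by_contra h
    push_neg at h
    exact hi ((hmemB i).mpr ⟨hone _ h.1, hone _ h.2⟩)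
  have hml : ∀ i j, Λ (b (Sum.inr i)) (b (Sum.inl j)) = if j = i then 1 else 0 := by
    intro i j; rw [hsymm, hlm]
  have hmlδ : ∀ i j : Fin k, Λ (b (Sum.inr i)) (b (Sum.inl j)) = if i = j then 1 else 0 := by
    intro i j; rw [hml]; exact if_congr eq_comm rfl rfl
  have hBcard : ((B.card : ℕ) : ZMod 2) = 0 := by
    have hmul : ∀ x y : ZMod 2, x * y = if x = 1 ∧ y = 1 then 1 else 0 := by decide
    have h1 : ∑ i : Fin k, a i * e i
        = ∑ i : Fin k, if a i = 1 ∧ e i = 1 then (1 : ZMod 2) else 0 :=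
      Finset.sum_congr rfl fun i _ => hmul (a i) (e i)
    have h2 : ∑ i : Fin k, (if a i = 1 ∧ e i = 1 then (1 : ZMod 2) else 0)
        = ((B.card : ℕ) : ZMod 2) := by
      rw [Finset.sum_boole, hB_def]
    rw [← h2, ← h1]
    exact hArf
  have hnea : ∀ i j : Fin k, a i = 0 → a j ≠ 0 → i ≠ j := by
    rintro i j h1 h2 rfl; exact h2 h1
  have hsum1 : ∀ (S : Finset (Fin k)) (j : Fin k),
      Λ (∑ m ∈ S, b (Sum.inr m)) (b (Sum.inl j)) = if j ∈ S then 1 else 0 := by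
    intro S j
    rw [map_sum, LinearMap.coe_sum, Finset.sum_apply]
    rw [Finset.sum_congr rfl (fun m _ => hml m j)]
    exact Finset.sum_ite_eq S j (fun _ => 1)
  have hsum2 : ∀ (S : Finset (Fin k)) (j : Fin k),
      Λ (∑ m ∈ S, b (Sum.inr m)) (b (Sum.inr j)) = 0 := by
    intro S j
    rw [map_sum, LinearMap.coe_sum, Finset.sum_apply]
    exact Finset.sum_eq_zero fun m _ => hmm m j
  have hsum3 : ∀ (S : Finset (Fin k)) (j : Fin k),
      Λ (b (Sum.inl j)) (∑ m ∈ S, b (Sum.inr m)) = if j ∈ S then 1 else 0 := by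
    intro S j
    rw [map_sum, Finset.sum_congr rfl (fun m _ => hlm j m)]
    exact Finset.sum_ite_eq S j (fun _ => 1)
  have hsum4 : ∀ (S : Finset (Fin k)) (j : Fin k),
      Λ (b (Sum.inr j)) (∑ m ∈ S, b (Sum.inr m)) = 0 := by
    intro S j
    rw [map_sum]
    exact Finset.sum_eq_zero fun m _ => hmm j m
  have hsum5 : ∀ (S T : Finset (Fin k)),
      Λ (∑ m ∈ S, b (Sum.inr m)) (∑ m ∈ T, b (Sum.inr m)) = 0 := by
    intro S T
    rw [map_sum]
    exact Finset.sum_eq_zero fun m _ => hsum2 S m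
  rcases B.eq_empty_or_nonempty with hB | hB
  · -- B empty: no bad indices
    set v : Fin k → H := fun i => if a i = 0 then b (Sum.inl i) else b (Sum.inr i) with hv_def
    set w : Fin k → H := fun i => if a i = 0 then b (Sum.inr i) else b (Sum.inl i) with hw_def
    have hgood : ∀ i, a i ≠ 0 → e i = 0 := by
      intro i hi
      rcases hnotB i (by rw [hB]; exact Finset.notMem_empty i) with h | h
      · exact absurd h hi
      · exact h
    have hv3 : ∀ i, a i = 0 → v i = b (Sum.inl i) := by
      intro i h; simp only [hv_def]; rw [if_pos h]
    have hv4 : ∀ i, a i ≠ 0 → v i = b (Sum.inr i) := by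
      intro i h; simp only [hv_def]; rw [if_neg h]
    have hw3 : ∀ i, a i = 0 → w i = b (Sum.inr i) := by
      intro i h; simp only [hw_def]; rw [if_pos h]
    have hw4 : ∀ i, a i ≠ 0 → w i = b (Sum.inl i) := by
      intro i h; simp only [hw_def]; rw [if_neg h]
    have hvw : ∀ i j, Λ (v i) (w j) = if i = j then 1 else 0 := by
      intro i j
      by_cases h1 : a i = 0 <;> by_cases h2 : a j = 0
      · rw [hv3 i h1, hw3 j h2, hlm]
      · rw [hv3 i h1, hw4 j h2, hll, if_neg (hnea i j h1 h2)]
      · rw [hv4 i h1, hw3 j h2, hmm, if_neg (Ne.symm (hnea j i h2 h1))]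
      · rw [hv4 i h1, hw4 j h2, hmlδ]
    have hwv : ∀ i j, Λ (w i) (v j) = if i = j then 1 else 0 := by
      intro i j
      rw [hsymm (w i) (v j), hvw j i]
      exact if_congr eq_comm rfl rfl
    have hvv : ∀ i j, Λ (v i) (v j) = 0 := by
      intro i j
      by_cases h1 : a i = 0 <;> by_cases h2 : a j = 0
      · rw [hv3 i h1, hv3 j h2, hll]
      · rw [hv3 i h1, hv4 j h2, hlm, if_neg (hnea i j h1 h2)]
      · rw [hv4 i h1, hv3 j h2, hml, if_neg (hnea j i h2 h1)]
      · rw [hv4 i h1, hv4 j h2, hmm]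
    have hww : ∀ i j, Λ (w i) (w j) = 0 := by
      intro i j
      by_cases h1 : a i = 0 <;> by_cases h2 : a j = 0
      · rw [hw3 i h1, hw3 j h2, hmm]
      · rw [hw3 i h1, hw4 j h2, hml, if_neg (Ne.symm (hnea i j h1 h2))]
      · rw [hw4 i h1, hw3 j h2, hlm, if_neg (Ne.symm (hnea j i h2 h1))]
      · rw [hw4 i h1, hw4 j h2, hll]
    have hsp : ∀ s, b s ∈ Submodule.span ℤ (Set.range v ∪ Set.range w) := by
      rintro (i | i)
      · by_cases h1 : a i = 0
        · exact Submodule.subset_span (Or.inl ⟨i, (hv3 i h1).symm ▸ rfl⟩)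
        · exact Submodule.subset_span (Or.inr ⟨i, (hw4 i h1).symm ▸ rfl⟩)
      · by_cases h1 : a i = 0
        · exact Submodule.subset_span (Or.inr ⟨i, (hw3 i h1).symm ▸ rfl⟩)
        · exact Submodule.subset_span (Or.inl ⟨i, (hv4 i h1).symm ▸ rfl⟩)
    have hsv : ∀ i, sν (v i) = 0 := by
      intro i
      by_cases h1 : a i = 0
      · rw [hv3 i h1]; exact h1
      · rw [hv4 i h1]; exact hgood i h1
    exact key_lemma b Λ sν v w hvw hwv hvv hww hsp hsv
  · -- B nonempty
    set i0 : Fin k := B.min' hB with hi0_def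
    have hi0B : i0 ∈ B := B.min'_mem hB
    set B' : Finset (Fin k) := B.erase i0 with hB'_def
    have hB'i0 : i0 ∉ B' := Finset.notMem_erase i0 B
    set v : Fin k → H := fun i =>
      if i = i0 then ∑ m ∈ B, b (Sum.inr m)
      else if i ∈ B then b (Sum.inl i) - b (Sum.inl i0)
      else if a i = 0 then b (Sum.inl i) else b (Sum.inr i) with hv_def
    set w : Fin k → H := fun i =>
      if i = i0 then b (Sum.inl i0)
      else if i ∈ B then b (Sum.inr i)
      else if a i = 0 then b (Sum.inr i) else b (Sum.inl i) with hw_def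
    have hneB : ∀ i j : Fin k, i ∈ B → j ∉ B → i ≠ j := by
      rintro i j h1 h2 rfl; exact h2 h1
    have hai : ∀ i, i ∈ B → a i = 1 := fun i hi => ((hmemB i).mp hi).1
    have hei : ∀ i, i ∈ B → e i = 1 := fun i hi => ((hmemB i).mp hi).2
    have hv1 : v i0 = ∑ m ∈ B, b (Sum.inr m) := by
      simp [hv_def]
    have hv2 : ∀ i, i ≠ i0 → i ∈ B → v i = b (Sum.inl i) - b (Sum.inl i0) := by
      intro i h1 h2; simp only [hv_def]; rw [if_neg h1, if_pos h2]
    have hv3 : ∀ i, i ∉ B → a i = 0 → v i = b (Sum.inl i) := by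
      intro i h1 h2
      simp only [hv_def]
      rw [if_neg (fun h : i = i0 => h1 (h ▸ hi0B)), if_neg h1, if_pos h2]
    have hv4 : ∀ i, i ∉ B → a i ≠ 0 → v i = b (Sum.inr i) := by
      intro i h1 h2
      simp only [hv_def]
      rw [if_neg (fun h : i = i0 => h1 (h ▸ hi0B)), if_neg h1, if_neg h2]
    have hw1 : w i0 = b (Sum.inl i0) := by simp [hw_def]
    have hw2 : ∀ i, i ≠ i0 → i ∈ B → w i = b (Sum.inr i) := by
      intro i h1 h2; simp only [hw_def]; rw [if_neg h1, if_pos h2]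
    have hw3 : ∀ i, i ∉ B → a i = 0 → w i = b (Sum.inr i) := by
      intro i h1 h2
      simp only [hw_def]
      rw [if_neg (fun h : i = i0 => h1 (h ▸ hi0B)), if_neg h1, if_pos h2]
    have hw4 : ∀ i, i ∉ B → a i ≠ 0 → w i = b (Sum.inl i) := by
      intro i h1 h2
      simp only [hw_def]
      rw [if_neg (fun h : i = i0 => h1 (h ▸ hi0B)), if_neg h1, if_neg h2]
    have hvw : ∀ i j, Λ (v i) (w j) = if i = j then 1 else 0 := by
      intro i j
      by_cases hii : i = i0
      · subst hii
        rw [hv1]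
        by_cases hjj : j = i0
        · subst hjj; rw [hw1, if_pos rfl, hsum1, if_pos hi0B]
        · rw [if_neg (fun h : i0 = j => hjj h.symm)]
          by_cases hjB : j ∈ B
          · rw [hw2 j hjj hjB, hsum2]
          · by_cases hja : a j = 0
            · rw [hw3 j hjB hja, hsum2]
            · rw [hw4 j hjB hja, hsum1, if_neg hjB]
      · by_cases hiB : i ∈ B
        · rw [hv2 i hii hiB]
          by_cases hjj : j = i0
          · subst hjj
            rw [if_neg hii, hw1, LinearMap.map_sub₂, hll, hll, sub_zero]
          · by_cases hjB : j ∈ B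
            · rw [hw2 j hjj hjB, LinearMap.map_sub₂, hlm, hlm,
                if_neg (fun h : i0 = j => hjj h.symm), sub_zero]
            · by_cases hja : a j = 0
              · rw [hw3 j hjB hja, LinearMap.map_sub₂, hlm, hlm,
                  if_neg (fun h : i0 = j => hjB (h ▸ hi0B)), sub_zero]
              · rw [hw4 j hjB hja, LinearMap.map_sub₂, hll, hll, sub_zero,
                  if_neg (hneB i j hiB hjB)]
        · by_cases hia : a i = 0
          · rw [hv3 i hiB hia]
            by_cases hjj : j = i0
            · subst hjj; rw [hw1, hll, if_neg hii]
            · by_cases hjB : j ∈ B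
              · rw [hw2 j hjj hjB, hlm]
              · by_cases hja : a j = 0
                · rw [hw3 j hjB hja, hlm]
                · rw [hw4 j hjB hja, hll, if_neg (hnea i j hia hja)]
          · rw [hv4 i hiB hia]
            by_cases hjj : j = i0
            · subst hjj
              rw [hw1, hmlδ]
            · by_cases hjB : j ∈ B
              · rw [hw2 j hjj hjB, hmm, if_neg (fun h : i = j => hiB (h ▸ hjB))]
              · by_cases hja : a j = 0
                · rw [hw3 j hjB hja, hmm,
                    if_neg (fun h : i = j => hia (h ▸ hja))]
                · rw [hw4 j hjB hja, hmlδ]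
    have hvv : ∀ i j, Λ (v i) (v j) = 0 := by
      intro i j
      by_cases hii : i = i0
      · subst hii
        rw [hv1]
        by_cases hjj : j = i0
        · subst hjj; rw [hv1, hsum5]
        · by_cases hjB : j ∈ B
          · rw [hv2 j hjj hjB, map_sub, hsum1, hsum1, if_pos hjB, if_pos hi0B, sub_self]
          · by_cases hja : a j = 0
            · rw [hv3 j hjB hja, hsum1, if_neg hjB]
            · rw [hv4 j hjB hja, hsum2]
      · by_cases hiB : i ∈ B
        · rw [hv2 i hii hiB]
          by_cases hjj : j = i0
          · subst hjj
            rw [hv1, LinearMap.map_sub₂, hsum3, hsum3, if_pos hiB, if_pos hi0B,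
              sub_self]
          · by_cases hjB : j ∈ B
            · rw [hv2 j hjj hjB, LinearMap.map_sub₂, map_sub, map_sub,
                hll, hll, hll, hll]
              ring
            · by_cases hja : a j = 0
              · rw [hv3 j hjB hja, LinearMap.map_sub₂, hll, hll, sub_self]
              · rw [hv4 j hjB hja, LinearMap.map_sub₂, hlm, hlm,
                  if_neg (hneB i j hiB hjB), if_neg (fun h : i0 = j => hjB (h ▸ hi0B)),
                  sub_self]
        · by_cases hia : a i = 0
          · rw [hv3 i hiB hia]
            by_cases hjj : j = i0
            · subst hjj; rw [hv1, hsum3, if_neg hiB]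
            · by_cases hjB : j ∈ B
              · rw [hv2 j hjj hjB, map_sub, hll, hll, sub_self]
              · by_cases hja : a j = 0
                · rw [hv3 j hjB hja, hll]
                · rw [hv4 j hjB hja, hlm, if_neg (hnea i j hia hja)]
          · rw [hv4 i hiB hia]
            by_cases hjj : j = i0
            · subst hjj; rw [hv1, hsum4]
            · by_cases hjB : j ∈ B
              · rw [hv2 j hjj hjB, map_sub, hml, hml,
                  if_neg (fun h : j = i => hiB (h ▸ hjB)),
                  if_neg (fun h : i0 = i => hiB (h ▸ hi0B)), sub_self]
              · by_cases hja : a j = 0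
                · rw [hv3 j hjB hja, hml, if_neg (fun h : j = i => hia (h ▸ hja))]
                · rw [hv4 j hjB hja, hmm]
    have hww : ∀ i j, Λ (w i) (w j) = 0 := by
      intro i j
      have wval : ∀ m : Fin k, (w m = b (Sum.inl m)) ∨ (w m = b (Sum.inr m)) := by
        intro m
        by_cases hmm' : m = i0
        · subst hmm'; left; exact hw1
        · by_cases hmB : m ∈ B
          · right; exact hw2 m hmm' hmB
          · by_cases hma : a m = 0
            · right; exact hw3 m hmB hma
            · left; exact hw4 m hmB hma
      rcases wval i with h1 | h1 <;> rcases wval j with h2 | h2 <;> rw [h1, h2]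
      · exact hll i j
      · rcases eq_or_ne i j with rfl | hne
        · exact absurd (h1.symm.trans h2) (fun h => by simpa using b.injective h)
        · rw [hlm, if_neg hne]
      · rcases eq_or_ne j i with rfl | hne
        · exact absurd (h2.symm.trans h1) (fun h => by simpa using b.injective h)
        · rw [hml, if_neg hne]
      · exact hmm i j
    have hwv : ∀ i j, Λ (w i) (v j) = if i = j then 1 else 0 := by
      intro i j
      rw [hsymm (w i) (v j), hvw j i]
      exact if_congr eq_comm rfl rfl
    have hsp : ∀ s, b s ∈ Submodule.span ℤ (Set.range v ∪ Set.range w) := by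
      rintro (i | i)
      · by_cases hii : i = i0
        · subst hii
          exact Submodule.subset_span (Or.inr ⟨i0, hw1.symm ▸ rfl⟩)
        · by_cases hiB : i ∈ B
          · have : b (Sum.inl i) = v i + w i0 := by
              rw [hv2 i hii hiB, hw1, sub_add_cancel]
            rw [this]
            exact Submodule.add_mem _ (Submodule.subset_span (Or.inl ⟨i, rfl⟩))
              (Submodule.subset_span (Or.inr ⟨i0, rfl⟩))
          · by_cases hia : a i = 0
            · exact Submodule.subset_span (Or.inl ⟨i, (hv3 i hiB hia).symm ▸ rfl⟩)
            · exact Submodule.subset_span (Or.inr ⟨i, (hw4 i hiB hia).symm ▸ rfl⟩)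
      · by_cases hii : i = i0
        · subst hii
          have hsum : ∑ j ∈ B', w j = ∑ j ∈ B', b (Sum.inr j) := by
            refine Finset.sum_congr rfl fun j hj => ?_
            exact hw2 j (Finset.ne_of_mem_erase hj) (Finset.mem_of_mem_erase hj)
          have hvio : b (Sum.inr i0) = v i0 - ∑ j ∈ B', w j := by
            rw [hv1, hsum, hB'_def, ← Finset.add_sum_erase B _ hi0B]
            abel
          rw [hvio]
          refine Submodule.sub_mem _ (Submodule.subset_span (Or.inl ⟨i0, rfl⟩)) ?_
          exact Submodule.sum_mem _ fun j _ => Submodule.subset_span (Or.inr ⟨j, rfl⟩)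
        · by_cases hiB : i ∈ B
          · exact Submodule.subset_span (Or.inr ⟨i, (hw2 i hii hiB).symm ▸ rfl⟩)
          · by_cases hia : a i = 0
            · exact Submodule.subset_span (Or.inr ⟨i, (hw3 i hiB hia).symm ▸ rfl⟩)
            · exact Submodule.subset_span (Or.inl ⟨i, (hv4 i hiB hia).symm ▸ rfl⟩)
    have hsv : ∀ i, sν (v i) = 0 := by
      intro i
      by_cases hii : i = i0
      · subst hii
        rw [hv1, map_sum]
        have h1 : ∀ j ∈ B, sν (b (Sum.inr j)) = 1 := fun j hj => hei j hj
        rw [Finset.sum_congr rfl h1, Finset.sum_const, nsmul_eq_mul, mul_one]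
        exact hBcard
      · by_cases hiB : i ∈ B
        · rw [hv2 i hii hiB, map_sub]
          have h1 : sν (b (Sum.inl i)) = 1 := hai i hiB
          have h2 : sν (b (Sum.inl i0)) = 1 := hai i0 hi0B
          rw [h1, h2, sub_self]
        · by_cases hia : a i = 0
          · rw [hv3 i hiB hia]; exact hia
          · rw [hv4 i hiB hia]
            rcases hnotB i hiB with h | h
            · exact absurd h hia
            · exact h
    exact key_lemma b Λ sν v w hvw hwv hvv hww hsp hsv
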